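/- Let a > 0, b ≥ 0, c > 0, u₀ ∈ ℝ, and let u be an axisymmetric stationary rotating profile on [0, c] with u(0) = u₀, i.e. u is differentiable on [0, c] and u'(r)/√(1 + u'(r)²) = r(a r² + 2b)/4 for all r ∈ [0, c]. Set R = c √(1 + u'(c)²)/u'(c), y(r) = R + u₀ − √(R² − r²), and w(r) = y(r) − y(c) + u(c). Then w(r) < u(r) for all r with 0 ≤ r < c. -/

import Mathlib

open Set

/-- If `x ≥ 0` and `x/√(1+x²) < y/√(1+y²)` then `x < y`. -/
lemma g_lt_g_aux (x y : ℝ) (hx : 0 ≤ x)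
    (h : x / Real.sqrt (1 + x ^ 2) < y / Real.sqrt (1 + y ^ 2)) : x < y := by
  by_contra hxy
  push_neg at hxy
  have hsx : 0 < Real.sqrt (1 + x ^ 2) := Real.sqrt_pos.2 (by positivity)
  have hsy : 0 < Real.sqrt (1 + y ^ 2) := Real.sqrt_pos.2 (by positivity)
  rw [div_lt_div_iff₀ hsx hsy] at h
  have e1 : Real.sqrt (1 + x ^ 2) ^ 2 = 1 + x ^ 2 := Real.sq_sqrt (by positivity)
  have e2 : Real.sqrt (1 + y ^ 2) ^ 2 = 1 + y ^ 2 := Real.sq_sqrt (by positivity)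
  have hy : 0 < y := by
    by_contra hy
    push_neg at hy
    have h1 : y * Real.sqrt (1 + x ^ 2) ≤ 0 := mul_nonpos_of_nonpos_of_nonneg hy hsx.le
    have h2 : 0 ≤ x * Real.sqrt (1 + y ^ 2) := mul_nonneg hx hsy.le
    linarith
  nlinarith [mul_nonneg hx hsy.le, mul_pos hy hsx, mul_pos hsx hsy, sq_nonneg (x - y)]

set_option maxHeartbeats 1600000 in
/-- Theorem (comparison with a lower circle): with `R = c√(1+u'(c)²)/u'(c)`,
`y(r) = R + u₀ - √(R² - r²)` and `w(r) = y(r) - y(c) + u(c)`, one has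
`w(r) < u(r)` for `0 ≤ r < c`. -/
theorem stmt_2 (a b c u₀ : ℝ) (ha : 0 < a) (hb : 0 ≤ b) (hc : 0 < c)
    (u u' : ℝ → ℝ)
    (hu : ∀ r ∈ Icc (0:ℝ) c, HasDerivAt u (u' r) r)
    (heq : ∀ r ∈ Icc (0:ℝ) c, u' r / Real.sqrt (1 + u' r ^ 2) = r * (a * r ^ 2 + 2 * b) / 4)
    (h0 : u 0 = u₀) :
    ∀ R : ℝ, R = c * Real.sqrt (1 + u' c ^ 2) / u' c →
      ∀ y : ℝ → ℝ, (∀ s, y s = R + u₀ - Real.sqrt (R ^ 2 - s ^ 2)) →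
        ∀ w : ℝ → ℝ, (∀ s, w s = y s - y c + u c) →
          ∀ r, 0 ≤ r → r < c → w r < u r := by
  intro R hR y hy w hw r hr hrc
  have hfc := heq c ⟨hc.le, le_refl c⟩
  have hsc : 0 < Real.sqrt (1 + u' c ^ 2) := Real.sqrt_pos.2 (by positivity)
  have hk : (0:ℝ) < c * (a * c ^ 2 + 2 * b) / 4 := by positivity
  have huc : 0 < u' c := by
    by_contra h
    push_neg at h
    have : u' c / Real.sqrt (1 + u' c ^ 2) ≤ 0 := div_nonpos_of_nonpos_of_nonneg h hsc.le
    rw [hfc] at this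
    linarith
  -- f(c) < 1
  have hflt1 : c * (a * c ^ 2 + 2 * b) / 4 < 1 := by
    rw [← hfc]
    rw [div_lt_one hsc]
    have h1 : u' c = Real.sqrt (u' c ^ 2) := (Real.sqrt_sq huc.le).symm
    calc u' c = Real.sqrt (u' c ^ 2) := h1
      _ < Real.sqrt (1 + u' c ^ 2) := Real.sqrt_lt_sqrt (by positivity) (by linarith)
  -- explicit value of R
  have hu'c_eq : u' c = c * (a * c ^ 2 + 2 * b) / 4 * Real.sqrt (1 + u' c ^ 2) := by
    rw [← hfc]; field_simp
  have hRval : R = 4 / (a * c ^ 2 + 2 * b) := by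
    have hab : (0:ℝ) < a * c ^ 2 + 2 * b := by positivity
    rw [hR]
    rw [show c * Real.sqrt (1 + u' c ^ 2) / u' c
        = c * Real.sqrt (1 + u' c ^ 2) / (c * (a * c ^ 2 + 2 * b) / 4 * Real.sqrt (1 + u' c ^ 2))
        from by rw [← hu'c_eq]]
    rw [show c * (a * c ^ 2 + 2 * b) / 4 * Real.sqrt (1 + u' c ^ 2)
        = c * (a * c ^ 2 + 2 * b) / 4 * Real.sqrt (1 + u' c ^ 2) from rfl,
      mul_comm c (Real.sqrt (1 + u' c ^ 2))]
    rw [mul_comm (c * (a * c ^ 2 + 2 * b) / 4) (Real.sqrt (1 + u' c ^ 2))]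
    rw [mul_div_mul_left _ _ hsc.ne']
    rw [div_div_eq_mul_div, eq_div_iff hab.ne']
    field_simp
  have hab : (0:ℝ) < a * c ^ 2 + 2 * b := by positivity
  have hRpos : 0 < R := by rw [hRval]; positivity
  have hRc : c < R := by
    rw [hRval, lt_div_iff₀ hab]
    nlinarith
  -- derivative of y on (r, c)
  have hyfun : y = fun s => R + u₀ - Real.sqrt (R ^ 2 - s ^ 2) := funext hy
  have hyderiv : ∀ s ∈ Ioo r c, HasDerivAt y (s / Real.sqrt (R ^ 2 - s ^ 2)) s := by
    intro s hs
    have hs0 : 0 ≤ s := le_trans hr hs.1.le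
    have h1 : 0 < R ^ 2 - s ^ 2 := by nlinarith [hs.2]
    have hsq : 0 < Real.sqrt (R ^ 2 - s ^ 2) := Real.sqrt_pos.2 h1
    have h2 : HasDerivAt (fun t : ℝ => R ^ 2 - t ^ 2) (-(2 * s)) s := by
      simpa using (hasDerivAt_pow 2 s).const_sub (R ^ 2)
    have h3 : HasDerivAt (fun t : ℝ => Real.sqrt (R ^ 2 - t ^ 2))
        (1 / (2 * Real.sqrt (R ^ 2 - s ^ 2)) * (-(2 * s))) s :=
      (Real.hasDerivAt_sqrt h1.ne').comp s h2
    have h4 := h3.const_sub (R + u₀)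
    rw [hyfun]
    refine h4.congr_deriv ?_
    field_simp
  -- MVT on [r, c] for u - y
  have hcont : ContinuousOn (fun s => u s - y s) (Icc r c) := by
    apply ContinuousOn.sub
    · intro s hs
      exact (hu s ⟨le_trans hr hs.1, hs.2⟩).continuousAt.continuousWithinAt
    · rw [hyfun]
      exact (continuous_const.sub (Real.continuous_sqrt.comp
        (continuous_const.sub (continuous_pow 2)))).continuousOn
  have hderiv : ∀ s ∈ Ioo r c, HasDerivAt (fun s => u s - y s)
      (u' s - s / Real.sqrt (R ^ 2 - s ^ 2)) s := by
    intro s hs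
    exact (hu s ⟨le_trans hr hs.1.le, hs.2.le⟩).sub (hyderiv s hs)
  obtain ⟨ξ, hξ, hslope⟩ := exists_hasDerivAt_eq_slope (fun s => u s - y s)
    (fun s => u' s - s / Real.sqrt (R ^ 2 - s ^ 2)) hrc hcont hderiv
  -- u'(ξ) < circle slope at ξ
  have hξ0 : 0 < ξ := lt_of_le_of_lt hr hξ.1
  have hξc : ξ < c := hξ.2
  have h1 : 0 < R ^ 2 - ξ ^ 2 := by nlinarith
  have hsq : 0 < Real.sqrt (R ^ 2 - ξ ^ 2) := Real.sqrt_pos.2 h1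
  have heqξ := heq ξ ⟨hξ0.le, hξc.le⟩
  set W := ξ / Real.sqrt (R ^ 2 - ξ ^ 2) with hW
  have hWsq : W ^ 2 = ξ ^ 2 / (R ^ 2 - ξ ^ 2) := by
    rw [hW, div_pow, Real.sq_sqrt h1.le]
  have hWg : W / Real.sqrt (1 + W ^ 2) = ξ / R := by
    have h2 : 1 + W ^ 2 = R ^ 2 / (R ^ 2 - ξ ^ 2) := by
      rw [hWsq]; field_simp; ring
    have h3 : Real.sqrt (1 + W ^ 2) = R / Real.sqrt (R ^ 2 - ξ ^ 2) := by
      rw [h2, Real.sqrt_div (by positivity : (0:ℝ) ≤ R ^ 2), Real.sqrt_sq hRpos.le]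
    rw [h3, hW]
    rw [div_div_div_cancel_right₀]
    exact hsq.ne'
  have hfξ : ξ * (a * ξ ^ 2 + 2 * b) / 4 < ξ / R := by
    have h3 : ξ / R = ξ * (a * c ^ 2 + 2 * b) / 4 := by
      rw [hRval]; field_simp
    rw [h3]
    have h5 : 0 < a * ξ * (c ^ 2 - ξ ^ 2) :=
      mul_pos (mul_pos ha hξ0) (by nlinarith)
    have h6 : ξ * (a * c ^ 2 + 2 * b) / 4 - ξ * (a * ξ ^ 2 + 2 * b) / 4
        = a * ξ * (c ^ 2 - ξ ^ 2) / 4 := by ring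
    linarith
  have hkey : u' ξ / Real.sqrt (1 + u' ξ ^ 2) < W / Real.sqrt (1 + W ^ 2) := by
    rw [heqξ, hWg]; exact hfξ
  have hu'ξnn : 0 ≤ u' ξ := by
    by_contra h
    push_neg at h
    have hs2 : 0 < Real.sqrt (1 + u' ξ ^ 2) := Real.sqrt_pos.2 (by positivity)
    have : u' ξ / Real.sqrt (1 + u' ξ ^ 2) < 0 := div_neg_of_neg_of_pos h hs2
    rw [heqξ] at this
    have : (0:ℝ) ≤ ξ * (a * ξ ^ 2 + 2 * b) / 4 := by positivity
    linarith
  have hlt : u' ξ < W := g_lt_g_aux _ _ hu'ξnn hkey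
  -- conclude
  have hcr : 0 < c - r := by linarith
  have hneg : (u c - y c - (u r - y r)) / (c - r) < 0 := by
    rw [← hslope]; simpa using sub_neg.2 hlt
  have : u c - y c - (u r - y r) < 0 := by
    by_contra h
    push_neg at h
    exact absurd (div_nonneg h hcr.le) (not_le.2 hneg)
  rw [hw r]
  linarith
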